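/- Let P and Q be bounded, positive, self-adjoint operators on a complex Hilbert space H, let γ > 0 and let T be a positive even integer with γ‖Q‖ < 1/4; let α ∈ [0, 1/2] and set λ := (γT)^{−1}. There exists a constant c_α < ∞, depending only on α, such that for every v ∈ H: ‖P^{α} R̄_T(Q) v‖_H ≤ c_α (γT)^{−α} ‖(P + λ I)^{α} (Q + λ I)^{−α}‖ · ‖v‖_H. (This is the deterministic bound of Proposition C.2, part 1, with P the population covariance T_s, Q the empirical covariance T_{x,s}, and v = L^s g̃_T.) -/

import Mathlib

open scoped NNReal

namespace EstAux

lemma rpow_mul_exp_neg_le_one {α : ℝ} (hα0 : 0 ≤ α) (hα1 : α ≤ 1) {s : ℝ} (hs : 0 ≤ s) :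
    s ^ α * Real.exp (-s) ≤ 1 := by
  rcases le_or_gt s 1 with h | h
  · have h1 : s ^ α ≤ 1 := Real.rpow_le_one hs h hα0
    have h2 : Real.exp (-s) ≤ 1 := by
      rw [← Real.exp_zero]
      exact Real.exp_le_exp.mpr (by linarith)
    calc s ^ α * Real.exp (-s) ≤ 1 * 1 :=
          mul_le_mul h1 h2 (Real.exp_pos _).le one_pos.le
      _ = 1 := one_mul 1
  · have h1 : s ^ α ≤ s := by
      calc s ^ α ≤ s ^ (1 : ℝ) := Real.rpow_le_rpow_of_exponent_le h.le hα1
        _ = s := Real.rpow_one s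
    have h2 : s ≤ Real.exp s := by linarith [Real.add_one_le_exp s]
    calc s ^ α * Real.exp (-s) ≤ s * Real.exp (-s) :=
          mul_le_mul_of_nonneg_right h1 (Real.exp_pos _).le
      _ = s / Real.exp s := by rw [Real.exp_neg, div_eq_mul_inv]
      _ ≤ 1 := (div_le_one (Real.exp_pos s)).mpr h2

lemma rpow_add_le {x l α : ℝ} (hx : 0 ≤ x) (hl : 0 ≤ l) (hα0 : 0 ≤ α) (hα1 : α ≤ 1) :
    (x + l) ^ α ≤ x ^ α + l ^ α := by
  have h := NNReal.rpow_add_le_add_rpow x.toNNReal l.toNNReal hα0 hα1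
  have h2 : ((x.toNNReal + l.toNNReal : ℝ≥0) : ℝ) ^ α ≤
      ((x.toNNReal : ℝ)) ^ α + ((l.toNNReal : ℝ)) ^ α := by
    rw [← NNReal.coe_rpow, ← NNReal.coe_rpow, ← NNReal.coe_rpow]
    exact_mod_cast h
  rwa [NNReal.coe_add, Real.coe_toNNReal _ hx, Real.coe_toNNReal _ hl] at h2

lemma key_scalar {α γ l x : ℝ} {m : ℕ} (hα0 : 0 ≤ α) (hα1 : α ≤ 1) (hγ : 0 < γ) (hm : 0 < m)
    (hl : l = (γ * (2 * m))⁻¹) (hx0 : 0 ≤ x) (hx1 : γ * x ≤ 1) :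
    (x + l) ^ α * (1 - γ * x) ^ m ≤ 3 * l ^ α := by
  have hm' : (0 : ℝ) < m := by exact_mod_cast hm
  have hlpos : 0 < l := by rw [hl]; positivity
  have h1x : 0 ≤ 1 - γ * x := by linarith
  have hγx : 0 ≤ γ * x := by positivity
  have hsub : (x + l) ^ α ≤ x ^ α + l ^ α := rpow_add_le hx0 hlpos.le hα0 hα1
  have hexp : (1 - γ * x) ^ m ≤ Real.exp (-(γ * x * m)) := by
    have h0 : 1 - γ * x ≤ Real.exp (-(γ * x)) := by
      linarith [Real.add_one_le_exp (-(γ * x))]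
    calc (1 - γ * x) ^ m ≤ (Real.exp (-(γ * x))) ^ m := pow_le_pow_left₀ h1x h0 m
      _ = Real.exp (-(γ * x) * m) := by rw [← Real.exp_nat_mul]; ring_nf
      _ = Real.exp (-(γ * x * m)) := by ring_nf
  have hx2 : x ^ α * Real.exp (-(γ * x * m)) ≤ 2 * l ^ α := by
    have hgm : 0 < γ * (m : ℝ) := by positivity
    have hxeq : x = (γ * x * m) * (γ * m)⁻¹ := by field_simp
    have hsplit : x ^ α = (γ * x * m) ^ α * ((γ * m)⁻¹) ^ α := by
      rw [← Real.mul_rpow (by positivity) (by positivity), ← hxeq]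
    have h2 : (γ * x * m) ^ α * Real.exp (-(γ * x * m)) ≤ 1 :=
      rpow_mul_exp_neg_le_one hα0 hα1 (by positivity)
    have h3 : ((γ * (m : ℝ))⁻¹) ^ α ≤ 2 * l ^ α := by
      have he : (γ * (m : ℝ))⁻¹ = 2 * l := by
        rw [hl]; field_simp
      rw [he, Real.mul_rpow (by norm_num) hlpos.le]
      have h2a : (2 : ℝ) ^ α ≤ 2 := by
        calc (2 : ℝ) ^ α ≤ (2 : ℝ) ^ (1 : ℝ) :=
              Real.rpow_le_rpow_of_exponent_le one_le_two hα1
          _ = 2 := Real.rpow_one 2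
      exact mul_le_mul_of_nonneg_right h2a (Real.rpow_nonneg hlpos.le α)
    calc x ^ α * Real.exp (-(γ * x * m))
        = ((γ * x * m) ^ α * Real.exp (-(γ * x * m))) * ((γ * (m : ℝ))⁻¹) ^ α := by
          rw [hsplit]; ring
      _ ≤ 1 * (2 * l ^ α) := mul_le_mul h2 h3 (by positivity) (by norm_num)
      _ = 2 * l ^ α := one_mul _
  have hpow_le_one : (1 - γ * x) ^ m ≤ 1 := pow_le_one₀ h1x (by linarith)
  calc (x + l) ^ α * (1 - γ * x) ^ m ≤ (x ^ α + l ^ α) * (1 - γ * x) ^ m :=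
        mul_le_mul_of_nonneg_right hsub (pow_nonneg h1x m)
    _ = x ^ α * (1 - γ * x) ^ m + l ^ α * (1 - γ * x) ^ m := by ring
    _ ≤ x ^ α * Real.exp (-(γ * x * m)) + l ^ α * 1 :=
        add_le_add (mul_le_mul_of_nonneg_left hexp (Real.rpow_nonneg hx0 α))
          (mul_le_mul_of_nonneg_left hpow_le_one (Real.rpow_nonneg hlpos.le α))
    _ ≤ 2 * l ^ α + l ^ α := by
        have := Real.rpow_nonneg hlpos.le α
        linarith [hx2]
    _ = 3 * l ^ α := by ring

end EstAux



/-- Fractional power `A^r` (for `r : ℝ`) of a bounded operator, via the continuous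
functional calculus for self-adjoint operators (real power `x ↦ x ^ r`). -/
noncomputable def opPow {H : Type*} [NormedAddCommGroup H] [InnerProductSpace ℂ H]
    [CompleteSpace H] (A : H →L[ℂ] H) (r : ℝ) : H →L[ℂ] H :=
  cfc (fun x : ℝ => x ^ r) A

/-- The tail-averaged gradient-descent filter operator
`Ḡ_T(Q) = (2/T) ∑_{t=T/2+1}^{T} γ ∑_{k=0}^{t-1} (I - γQ)^k`. -/
noncomputable def Gbar {H : Type*} [NormedAddCommGroup H] [InnerProductSpace ℂ H]
    [CompleteSpace H] (γ : ℝ) (T : ℕ) (Q : H →L[ℂ] H) : H →L[ℂ] H :=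
  (2 / (T : ℂ)) • ∑ t ∈ Finset.Ioc (T / 2) T,
    (γ : ℂ) • ∑ k ∈ Finset.range t, (1 - (γ : ℂ) • Q) ^ k

/-- The tail-averaged gradient-descent residual operator
`R̄_T(Q) = (2/T) ∑_{t=T/2+1}^{T} (I - γQ)^t`. -/
noncomputable def Rbar {H : Type*} [NormedAddCommGroup H] [InnerProductSpace ℂ H]
    [CompleteSpace H] (γ : ℝ) (T : ℕ) (Q : H →L[ℂ] H) : H →L[ℂ] H :=
  (2 / (T : ℂ)) • ∑ t ∈ Finset.Ioc (T / 2) T, (1 - (γ : ℂ) • Q) ^ t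

set_option maxHeartbeats 2000000 in
/-- Proposition C.2, part 1, deterministic bound.
For bounded positive self-adjoint operators `P, Q`, `γ > 0`, a positive even
integer `T` with `γ‖Q‖ < 1/4`, `α ∈ [0, 1/2]`, and `λ = (γT)⁻¹`, there is a
constant `c_α` (depending only on `α`) with
`‖P^α R̄_T(Q) v‖ ≤ c_α (γT)^{-α} ‖(P + λI)^α (Q + λI)^{-α}‖ ‖v‖` for all `v`. -/
theorem estimation_error_deterministic_bound
    {H : Type*} [NormedAddCommGroup H] [InnerProductSpace ℂ H] [CompleteSpace H]
    (α : ℝ) (hα : α ∈ Set.Icc (0 : ℝ) (1 / 2)) :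
    ∃ c : ℝ, ∀ (P Q : H →L[ℂ] H), P.IsPositive → Q.IsPositive →
      ∀ (γ : ℝ) (T : ℕ), 0 < γ → 0 < T → Even T → γ * ‖Q‖ < 1 / 4 →
      ∀ v : H,
        ‖opPow P α (Rbar γ T Q v)‖ ≤
          c * (γ * (T : ℝ)) ^ (-α) *
            ‖opPow (P + ((γ * (T : ℝ))⁻¹ : ℝ) • (1 : H →L[ℂ] H)) α *
              opPow (Q + ((γ * (T : ℝ))⁻¹ : ℝ) • (1 : H →L[ℂ] H)) (-α)‖ * ‖v‖ := by
  obtain ⟨hα0, hα12⟩ := hα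
  have hα1 : α ≤ 1 := hα12.trans (by norm_num)
  refine ⟨3, fun P Q hP hQ γ T hγ hT hTe hQn v => ?_⟩
  rcases subsingleton_or_nontrivial H with hH | hH
  · have h0 : opPow P α (Rbar γ T Q v) = 0 := Subsingleton.elim _ _
    rw [h0, norm_zero]
    positivity
  -- nontrivial case
  obtain ⟨m, rfl⟩ := hTe
  have hm : 0 < m := by omega
  have hm' : (0 : ℝ) < m := by exact_mod_cast hm
  have hTm : ((m + m : ℕ) : ℝ) = 2 * m := by push_cast; ring
  set l : ℝ := (γ * ((m + m : ℕ) : ℝ))⁻¹ with hldef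
  have hl0 : 0 < l := by rw [hldef, hTm]; positivity
  have hleq : l = (γ * (2 * (m : ℝ)))⁻¹ := by rw [hldef, hTm]
  have hQsa : IsSelfAdjoint Q := hQ.isSelfAdjoint
  have hPsa : IsSelfAdjoint P := hP.isSelfAdjoint
  have hQspec : ∀ x ∈ spectrum ℝ Q, 0 ≤ x ∧ x ≤ ‖Q‖ := by
    intro x hx
    refine ⟨spectrum_nonneg_of_nonneg
      ((ContinuousLinearMap.nonneg_iff_isPositive Q).mpr hQ) hx, ?_⟩
    have h := spectrum.norm_le_norm_of_mem hx
    rw [Real.norm_eq_abs] at h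
    exact (le_abs_self x).trans h
  have hPspec : ∀ x ∈ spectrum ℝ P, 0 ≤ x := fun x hx =>
    spectrum_nonneg_of_nonneg ((ContinuousLinearMap.nonneg_iff_isPositive P).mpr hP) hx
  -- continuity helpers
  have hcont_pow : Continuous (fun x : ℝ => x ^ α) := Real.continuous_rpow_const hα0
  have hcont_shift_pow : Continuous (fun x : ℝ => (x + l) ^ α) :=
    (Real.continuous_rpow_const hα0).comp (continuous_id.add continuous_const)
  have hcont_negP : ContinuousOn (fun x : ℝ => (x + l) ^ (-α)) (spectrum ℝ P) := by
    intro x hx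
    have hne : x + l ≠ 0 := by have := hPspec x hx; positivity
    have hadd : ContinuousAt (fun y : ℝ => y + l) x := by fun_prop
    exact (hadd.rpow_const (Or.inl hne)).continuousWithinAt
  -- shift identities
  have shift : ∀ (A : H →L[ℂ] H), IsSelfAdjoint A →
      cfc (fun x : ℝ => x + l) A = A + l • 1 := by
    intro A hA
    have h1 : cfc (fun x : ℝ => x + l) A =
        cfc (id : ℝ → ℝ) A + cfc (fun _ : ℝ => l) A := by
      rw [← cfc_add (a := A) (f := (id : ℝ → ℝ)) (g := fun _ : ℝ => l)
        (by fun_prop) (by fun_prop)]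
      rfl
    rw [h1, cfc_id ℝ A, cfc_const l A, Algebra.algebraMap_eq_smul_one]
  have hcomp : ∀ (A : H →L[ℂ] H), IsSelfAdjoint A → (∀ x ∈ spectrum ℝ A, 0 ≤ x) → ∀ β : ℝ,
      opPow (A + l • 1) β = cfc (fun x : ℝ => (x + l) ^ β) A := by
    intro A hA hspec β
    have hg : ContinuousOn (fun x : ℝ => x ^ β) ((fun x : ℝ => x + l) '' spectrum ℝ A) := by
      rintro y ⟨x, hx, rfl⟩
      have hxl : x + l ≠ 0 := by have := hspec x hx; positivity
      exact (Real.continuousAt_rpow_const (x + l) β (Or.inl hxl)).continuousWithinAt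
    rw [opPow, ← shift A hA,
      ← cfc_comp' (fun x : ℝ => x ^ β) (fun x : ℝ => x + l) A hg (by fun_prop)]
  have hPl := hcomp P hPsa hPspec α
  have hQl := hcomp Q hQsa (fun x hx => (hQspec x hx).1) (-α)
  -- Rbar as cfc
  set fT : ℝ → ℝ :=
    fun x => (2 / ((m + m : ℕ) : ℝ)) * ∑ t ∈ Finset.Ioc ((m + m) / 2) (m + m), (1 - γ * x) ^ t
    with hfT
  have hcont_fT : Continuous fT := by
    rw [hfT]
    exact continuous_const.mul (continuous_finset_sum _ fun t _ =>
      ((continuous_const.sub (continuous_const.mul continuous_id)).pow t))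
  have hRQ : Rbar γ (m + m) Q = cfc fT Q := by
    have hbase : cfc (fun x : ℝ => 1 - γ * x) Q = 1 - γ • Q := by
      rw [cfc_sub (fun _ : ℝ => (1 : ℝ)) (fun x : ℝ => γ * x) Q (by fun_prop) (by fun_prop),
        cfc_const_one ℝ Q, cfc_const_mul_id γ Q]
    have hsum : cfc (fun x : ℝ => ∑ t ∈ Finset.Ioc ((m + m) / 2) (m + m), (1 - γ * x) ^ t) Q =
        ∑ t ∈ Finset.Ioc ((m + m) / 2) (m + m), (1 - γ • Q) ^ t := by
      have heq : (fun x : ℝ => ∑ t ∈ Finset.Ioc ((m + m) / 2) (m + m), (1 - γ * x) ^ t) =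
          ∑ t ∈ Finset.Ioc ((m + m) / 2) (m + m), (fun x : ℝ => (1 - γ * x) ^ t) := by
        ext x; simp
      rw [heq, cfc_sum _ Q _ (fun i _ => by fun_prop)]
      refine Finset.sum_congr rfl fun t _ => ?_
      rw [cfc_pow (fun x : ℝ => 1 - γ * x) t Q (by fun_prop), hbase]
    rw [hfT]
    rw [show (fun x : ℝ =>
        (2 / ((m + m : ℕ) : ℝ)) * ∑ t ∈ Finset.Ioc ((m + m) / 2) (m + m), (1 - γ * x) ^ t) =
        (fun x : ℝ => (2 / ((m + m : ℕ) : ℝ)) * (fun y : ℝ =>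
          ∑ t ∈ Finset.Ioc ((m + m) / 2) (m + m), (1 - γ * y) ^ t) x) from rfl,
      cfc_const_mul (2 / ((m + m : ℕ) : ℝ)) _ Q (by fun_prop), hsum]
    rw [Rbar]
    have hc : (2 / ((m + m : ℕ) : ℂ)) = (((2 / ((m + m : ℕ) : ℝ)) : ℝ) : ℂ) := by
      push_cast; ring
    rw [hc, Complex.coe_smul, Complex.coe_smul]
  -- the three factors
  set M : H →L[ℂ] H := cfc (fun x : ℝ => x ^ α * (x + l) ^ (-α)) P with hM
  set N : H →L[ℂ] H := cfc (fun x : ℝ => (x + l) ^ α * fT x) Q with hN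
  have idP : M * opPow (P + l • 1) α = opPow P α := by
    rw [hM, hPl,
      ← cfc_mul (fun x : ℝ => x ^ α * (x + l) ^ (-α)) (fun x : ℝ => (x + l) ^ α) P
        (hcont_pow.continuousOn.mul hcont_negP) hcont_shift_pow.continuousOn,
      opPow]
    apply cfc_congr
    intro x hx
    have hx0 : 0 ≤ x := hPspec x hx
    have hxl : 0 < x + l := by linarith
    show x ^ α * (x + l) ^ (-α) * (x + l) ^ α = x ^ α
    rw [Real.rpow_neg hxl.le, mul_assoc,
      inv_mul_cancel₀ (Real.rpow_pos_of_pos hxl α).ne', mul_one]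
  have idQ : opPow (Q + l • 1) (-α) * N = Rbar γ (m + m) Q := by
    have hcont_negQ : ContinuousOn (fun x : ℝ => (x + l) ^ (-α)) (spectrum ℝ Q) := by
      intro x hx
      have hne : x + l ≠ 0 := by have := (hQspec x hx).1; positivity
      have hadd : ContinuousAt (fun y : ℝ => y + l) x := by fun_prop
      exact (hadd.rpow_const (Or.inl hne)).continuousWithinAt
    rw [hN, hQl,
      ← cfc_mul (fun x : ℝ => (x + l) ^ (-α)) (fun x : ℝ => (x + l) ^ α * fT x) Q
        hcont_negQ (hcont_shift_pow.mul hcont_fT).continuousOn,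
      hRQ]
    apply cfc_congr
    intro x hx
    have hx0 : 0 ≤ x := (hQspec x hx).1
    have hxl : 0 < x + l := by linarith
    show (x + l) ^ (-α) * ((x + l) ^ α * fT x) = fT x
    rw [Real.rpow_neg hxl.le, ← mul_assoc,
      inv_mul_cancel₀ (Real.rpow_pos_of_pos hxl α).ne', one_mul]
  -- norm bounds
  have hMb : ‖M‖ ≤ 1 := by
    refine norm_cfc_le zero_le_one fun x hx => ?_
    have hx0 : 0 ≤ x := hPspec x hx
    have hxl : 0 < x + l := by linarith
    rw [Real.norm_eq_abs, abs_of_nonneg (mul_nonneg (Real.rpow_nonneg hx0 α)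
      (Real.rpow_nonneg hxl.le (-α)))]
    rw [Real.rpow_neg hxl.le, ← div_eq_mul_inv]
    exact (div_le_one (Real.rpow_pos_of_pos hxl α)).mpr
      (Real.rpow_le_rpow hx0 (by linarith) hα0)
  have hNb : ‖N‖ ≤ 3 * l ^ α := by
    refine norm_cfc_le (by positivity) fun x hx => ?_
    obtain ⟨hx0, hxQ⟩ := hQspec x hx
    have hγx1 : γ * x ≤ 1 := by nlinarith [mul_le_mul_of_nonneg_left hxQ hγ.le]
    have hγx : 0 ≤ γ * x := by positivity
    have h1x : 0 ≤ 1 - γ * x := by linarith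
    have hfT0 : 0 ≤ fT x := by
      rw [hfT]
      have : (0:ℝ) ≤ ((m + m : ℕ) : ℝ) := by positivity
      exact mul_nonneg (by positivity)
        (Finset.sum_nonneg fun t _ => pow_nonneg h1x t)
    have hfTle : fT x ≤ (1 - γ * x) ^ m := by
      rw [hfT]
      have hd2 : (m + m) / 2 = m := by omega
      rw [hd2]
      have hsumle : ∑ t ∈ Finset.Ioc m (m + m), (1 - γ * x) ^ t ≤
          (Finset.Ioc m (m + m)).card • ((1 - γ * x) ^ m) :=
        Finset.sum_le_card_nsmul _ _ _ fun t ht =>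
          pow_le_pow_of_le_one h1x (by linarith) (Finset.mem_Ioc.mp ht).1.le
      rw [Nat.card_Ioc, nsmul_eq_mul] at hsumle
      have hcard : ((m + m - m : ℕ) : ℝ) = m := by
        congr 1; omega
      rw [hcard] at hsumle
      calc (2 / ((m + m : ℕ) : ℝ)) * ∑ t ∈ Finset.Ioc m (m + m), (1 - γ * x) ^ t
          ≤ (2 / ((m + m : ℕ) : ℝ)) * ((m : ℝ) * (1 - γ * x) ^ m) := by
            apply mul_le_mul_of_nonneg_left hsumle
            rw [hTm]; positivity
        _ = (1 - γ * x) ^ m := by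
            rw [hTm]; field_simp
    rw [Real.norm_eq_abs, abs_of_nonneg (mul_nonneg (Real.rpow_nonneg (by linarith) α) hfT0)]
    calc (x + l) ^ α * fT x ≤ (x + l) ^ α * (1 - γ * x) ^ m :=
          mul_le_mul_of_nonneg_left hfTle (Real.rpow_nonneg (by linarith) α)
      _ ≤ 3 * l ^ α := EstAux.key_scalar hα0 hα1 hγ hm hleq hx0 hγx1
  -- assemble
  set X : H →L[ℂ] H := opPow (P + l • 1) α * opPow (Q + l • 1) (-α) with hX
  have keyEq : opPow P α * Rbar γ (m + m) Q = M * X * N := by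
    rw [hX, ← idP, ← idQ]
    simp only [mul_assoc]
  have hlα : (γ * ((m + m : ℕ) : ℝ)) ^ (-α) = l ^ α := by
    have hpos : (0:ℝ) < γ * ((m + m : ℕ) : ℝ) := by rw [hTm]; positivity
    rw [Real.rpow_neg hpos.le, ← Real.inv_rpow hpos.le, hldef]
  have happ : opPow P α (Rbar γ (m + m) Q v) = (opPow P α * Rbar γ (m + m) Q) v := rfl
  rw [happ, keyEq]
  calc ‖(M * X * N) v‖ ≤ ‖M * X * N‖ * ‖v‖ := ContinuousLinearMap.le_opNorm _ v
    _ ≤ ‖M‖ * ‖X‖ * ‖N‖ * ‖v‖ := by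
        refine mul_le_mul_of_nonneg_right ?_ (norm_nonneg v)
        calc ‖M * X * N‖ ≤ ‖M * X‖ * ‖N‖ := norm_mul_le _ _
          _ ≤ ‖M‖ * ‖X‖ * ‖N‖ :=
              mul_le_mul_of_nonneg_right (norm_mul_le _ _) (norm_nonneg _)
    _ ≤ 1 * ‖X‖ * (3 * l ^ α) * ‖v‖ := by
        have h1 : ‖M‖ * ‖X‖ * ‖N‖ ≤ 1 * ‖X‖ * ‖N‖ :=
          mul_le_mul_of_nonneg_right
            (mul_le_mul_of_nonneg_right hMb (norm_nonneg X)) (norm_nonneg N)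
        have h2 : 1 * ‖X‖ * ‖N‖ ≤ 1 * ‖X‖ * (3 * l ^ α) :=
          mul_le_mul_of_nonneg_left hNb (by positivity)
        exact mul_le_mul_of_nonneg_right (h1.trans h2) (norm_nonneg v)
    _ = 3 * (γ * ((m + m : ℕ) : ℝ)) ^ (-α) * ‖X‖ * ‖v‖ := by
        rw [hlα]; ring
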